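/- Let V be an affine variety over an algebraically closed field k and let K be an algebraically closed field extension of k. The natural map from the k-rational points of V to the K-points of the base change V ×_k K, sending a maximal ideal 𝔪 of k[V] to the maximal ideal 𝔪·(k[V] ⊗_k K), is a homeomorphism onto its image with respect to the Zariski topologies. -/

import Mathlib

open TensorProduct

section Aux

variable {k A K : Type*} [Field k] [IsAlgClosed k] [CommRing A] [Algebra k A]
  [Algebra.FiniteType k A] [Field K] [Algebra k K]

/-- Weak Nullstellensatz: the residue field of a maximal ideal of a finitely generated
algebra over an algebraically closed field is `k` itself, packaged as an evaluation map. -/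
lemma stmt9_aux_residue (𝔪 : Ideal A) (hm : 𝔪.IsMaximal) :
    ∃ φ : A →ₐ[k] k, ∀ a, φ a = 0 ↔ a ∈ 𝔪 := by
  letI : Ideal.IsMaximal 𝔪 := hm
  letI : Field (A ⧸ 𝔪) := Ideal.Quotient.field 𝔪
  have hfin : Module.Finite k (A ⧸ 𝔪) := finite_of_finite_type_of_isJacobsonRing k _
  have hint : Algebra.IsIntegral k (A ⧸ 𝔪) := Algebra.IsIntegral.of_finite k _
  have hsurj : Function.Surjective (algebraMap k (A ⧸ 𝔪)) :=
    IsAlgClosed.algebraMap_bijective_of_isIntegral.2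
  have hinj : Function.Injective (algebraMap k (A ⧸ 𝔪)) := (algebraMap k (A ⧸ 𝔪)).injective
  let e : k ≃ₐ[k] (A ⧸ 𝔪) := AlgEquiv.ofBijective (Algebra.ofId k (A ⧸ 𝔪)) ⟨hinj, hsurj⟩
  refine ⟨e.symm.toAlgHom.comp (Ideal.Quotient.mkₐ k 𝔪), fun a => ?_⟩
  rw [AlgHom.comp_apply]
  constructor
  · intro h
    have h2 : Ideal.Quotient.mkₐ k 𝔪 a = e 0 := by rw [← h]; simp
    rw [map_zero] at h2
    exact (Ideal.Quotient.eq_zero_iff_mem).mp h2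
  · intro h
    have h2 : (Ideal.Quotient.mkₐ k 𝔪) a = 0 := Ideal.Quotient.eq_zero_iff_mem.mpr h
    rw [h2, map_zero]

/-- The evaluation map `A ⊗[k] K → K` induced by `φ : A → k`. -/
noncomputable def stmt9Psi (φ : A →ₐ[k] k) (K : Type*) [Field K] [Algebra k K] :
    A ⊗[k] K →ₐ[k] K :=
  Algebra.TensorProduct.productMap ((IsScalarTower.toAlgHom k k K).comp φ) (AlgHom.id k K)

lemma stmt9Psi_tmul (φ : A →ₐ[k] k) (a : A) (c : K) :
    stmt9Psi φ K (a ⊗ₜ c) = φ a • c := by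
  simp [stmt9Psi, Algebra.TensorProduct.productMap_apply_tmul, Algebra.smul_def]

lemma stmt9Psi_surjective (φ : A →ₐ[k] k) :
    Function.Surjective (stmt9Psi (K := K) φ) := fun c =>
  ⟨1 ⊗ₜ c, by rw [stmt9Psi_tmul, map_one, one_smul]⟩

lemma stmt9_map_le_ker (𝔪 : Ideal A) (φ : A →ₐ[k] k)
    (hφ : ∀ a, φ a = 0 ↔ a ∈ 𝔪) :
    𝔪.map (algebraMap A (A ⊗[k] K)) ≤ RingHom.ker (stmt9Psi φ K).toRingHom := by
  refine Ideal.map_le_iff_le_comap.mpr fun a ha => ?_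
  have h1 : algebraMap A (A ⊗[k] K) a = a ⊗ₜ (1 : K) := rfl
  rw [Ideal.mem_comap, RingHom.mem_ker, AlgHom.toRingHom_eq_coe, RingHom.coe_coe, h1,
    stmt9Psi_tmul, (hφ a).mpr ha, zero_smul]

lemma stmt9Psi_repr (φ : A →ₐ[k] k) {ι : Type*} (b : Module.Basis ι k K) (x : A ⊗[k] K) :
    stmt9Psi φ K x = ((b.baseChange A).repr x).sum fun i a => φ a • b i := by
  conv_lhs => rw [← (b.baseChange A).linearCombination_repr x,
    Finsupp.linearCombination_apply, Finsupp.sum, map_sum]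
  rw [Finsupp.sum]
  refine Finset.sum_congr rfl fun i _ => ?_
  rw [Module.Basis.baseChange_apply, smul_tmul', smul_eq_mul, mul_one, stmt9Psi_tmul]

lemma stmt9_repr_mem_of_psi_zero (𝔪 : Ideal A) (φ : A →ₐ[k] k)
    (hφ : ∀ a, φ a = 0 ↔ a ∈ 𝔪) {ι : Type*} (b : Module.Basis ι k K) {x : A ⊗[k] K}
    (hx : stmt9Psi φ K x = 0) (i : ι) : (b.baseChange A).repr x i ∈ 𝔪 := by
  set B := b.baseChange A with hB
  have h0 : Finsupp.linearCombination k b ((B.repr x).mapRange (φ) (map_zero φ)) = 0 := by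
    rw [Finsupp.linearCombination_apply,
      Finsupp.sum_mapRange_index (fun i => by rw [zero_smul]), ← stmt9Psi_repr φ b x, hx]
  have hlin := linearIndependent_iff.mp b.linearIndependent _ h0
  have h2 : φ (B.repr x i) = 0 := by
    have := DFunLike.congr_fun hlin i
    simpa using this
  exact (hφ _).mp h2

lemma stmt9_mem_map_of_repr (𝔪 : Ideal A) {ι : Type*} (b : Module.Basis ι k K) {x : A ⊗[k] K}
    (h : ∀ i, (b.baseChange A).repr x i ∈ 𝔪) :
    x ∈ 𝔪.map (algebraMap A (A ⊗[k] K)) := by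
  set B := b.baseChange A with hB
  have hx : x = (B.repr x).sum fun i a => a • B i := by
    conv_lhs => rw [← B.linearCombination_repr x, Finsupp.linearCombination_apply]
  rw [hx, Finsupp.sum]
  refine Ideal.sum_mem _ fun i _ => ?_
  rw [Algebra.smul_def]
  exact Ideal.mul_mem_right _ _ (Ideal.mem_map_of_mem _ (h i))

lemma stmt9_mem_map_iff (𝔪 : Ideal A) (φ : A →ₐ[k] k)
    (hφ : ∀ a, φ a = 0 ↔ a ∈ 𝔪) {ι : Type*} (b : Module.Basis ι k K) (x : A ⊗[k] K) :
    x ∈ 𝔪.map (algebraMap A (A ⊗[k] K)) ↔ ∀ i, (b.baseChange A).repr x i ∈ 𝔪 :=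
  ⟨fun hx i => stmt9_repr_mem_of_psi_zero 𝔪 φ hφ b (stmt9_map_le_ker 𝔪 φ hφ hx) i,
    fun h => stmt9_mem_map_of_repr 𝔪 b h⟩

lemma stmt9_ker_psi (𝔪 : Ideal A) (φ : A →ₐ[k] k)
    (hφ : ∀ a, φ a = 0 ↔ a ∈ 𝔪) :
    RingHom.ker (stmt9Psi φ K).toRingHom = 𝔪.map (algebraMap A (A ⊗[k] K)) := by
  refine le_antisymm (fun x hx => ?_) (stmt9_map_le_ker 𝔪 φ hφ)
  exact stmt9_mem_map_of_repr 𝔪 (Module.Basis.ofVectorSpace k K)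
    (stmt9_repr_mem_of_psi_zero 𝔪 φ hφ (Module.Basis.ofVectorSpace k K) hx)

lemma stmt9_map_isMaximal (𝔪 : Ideal A) (φ : A →ₐ[k] k)
    (hφ : ∀ a, φ a = 0 ↔ a ∈ 𝔪) :
    (𝔪.map (algebraMap A (A ⊗[k] K))).IsMaximal := by
  rw [← stmt9_ker_psi 𝔪 φ hφ]
  exact RingHom.ker_isMaximal_of_surjective _ (stmt9Psi_surjective φ)

lemma stmt9_comap_map (𝔪 : Ideal A) (hm : 𝔪.IsMaximal) (φ : A →ₐ[k] k)
    (hφ : ∀ a, φ a = 0 ↔ a ∈ 𝔪) :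
    (𝔪.map (algebraMap A (A ⊗[k] K))).comap (algebraMap A (A ⊗[k] K)) = 𝔪 := by
  refine le_antisymm (fun a ha => ?_) Ideal.le_comap_map
  rw [Ideal.mem_comap, ← stmt9_ker_psi 𝔪 φ hφ, RingHom.mem_ker] at ha
  have h1 : algebraMap A (A ⊗[k] K) a = a ⊗ₜ (1 : K) := rfl
  rw [AlgHom.toRingHom_eq_coe, RingHom.coe_coe, h1, stmt9Psi_tmul] at ha
  refine (hφ a).mp ?_
  have : algebraMap k K (φ a) = 0 := by rwa [Algebra.smul_def, mul_one] at ha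
  exact (algebraMap k K).injective (by rw [this, map_zero])

end Aux


/-- Let `V` be an affine variety over an algebraically closed field `k`
(with coordinate ring `A = k[V]`, a finitely generated reduced `k`-algebra) and let `K`
be an algebraically closed field extension of `k`.  The natural map from the `k`-rational
points of `V` (= maximal ideals of `A`) to the `K`-points of the base change
`V ×ₖ K` (= maximal ideals of `A ⊗ₖ K`), sending `𝔪` to `𝔪 · (A ⊗ₖ K)`, is well
defined and is a homeomorphism onto its image for the Zariski topologies. -/
theorem stmt9 {k : Type*} [Field k] [IsAlgClosed k]
    (A : Type*) [CommRing A] [Algebra k A] [Algebra.FiniteType k A] [IsReduced A]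
    (K : Type*) [Field K] [Algebra k K] [IsAlgClosed K] :
    ∃ η : {p : PrimeSpectrum A // p.asIdeal.IsMaximal} →
        {q : PrimeSpectrum (A ⊗[k] K) // q.asIdeal.IsMaximal},
      (∀ 𝔪, (η 𝔪).1.asIdeal =
          Ideal.map (algebraMap A (A ⊗[k] K)) 𝔪.1.asIdeal) ∧
      Topology.IsEmbedding η := by
  classical
  -- choose an evaluation map for each maximal ideal
  choose φ hφ using fun m : {p : PrimeSpectrum A // p.asIdeal.IsMaximal} =>
    stmt9_aux_residue (k := k) m.1.asIdeal m.2
  let η : {p : PrimeSpectrum A // p.asIdeal.IsMaximal} →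
      {q : PrimeSpectrum (A ⊗[k] K) // q.asIdeal.IsMaximal} := fun m =>
    ⟨⟨Ideal.map (algebraMap A (A ⊗[k] K)) m.1.asIdeal,
      (stmt9_map_isMaximal m.1.asIdeal (φ m) (hφ m)).isPrime⟩,
      stmt9_map_isMaximal m.1.asIdeal (φ m) (hφ m)⟩
  refine ⟨η, fun m => rfl, ?_⟩
  -- continuity of η
  let b : Module.Basis (Module.Basis.ofVectorSpaceIndex k K) k K := Module.Basis.ofVectorSpace k K
  have hcont1 : Continuous (fun m => (η m).1 :
      {p : PrimeSpectrum A // p.asIdeal.IsMaximal} → PrimeSpectrum (A ⊗[k] K)) := by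
    rw [continuous_iff_isClosed]
    intro C hC
    obtain ⟨s, rfl⟩ := (PrimeSpectrum.isClosed_iff_zeroLocus C).mp hC
    have hset : (fun m => (η m).1) ⁻¹' PrimeSpectrum.zeroLocus s =
        Subtype.val ⁻¹' PrimeSpectrum.zeroLocus
          (⋃ x ∈ s, Set.range ((b.baseChange A).repr x)) := by
      ext m
      simp only [Set.mem_preimage, PrimeSpectrum.mem_zeroLocus]
      constructor
      · intro h a ha
        simp only [Set.mem_iUnion, Set.mem_range] at ha
        obtain ⟨x, hx, i, rfl⟩ := ha
        exact (stmt9_mem_map_iff m.1.asIdeal (φ m) (hφ m) b x).mp (h hx) i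
      · intro h x hx
        refine (stmt9_mem_map_iff m.1.asIdeal (φ m) (hφ m) b x).mpr fun i => ?_
        exact h (Set.mem_iUnion.mpr ⟨x, Set.mem_iUnion.mpr ⟨hx, ⟨i, rfl⟩⟩⟩)
    rw [hset]
    exact (PrimeSpectrum.isClosed_zeroLocus _).preimage continuous_subtype_val
  have hcont : Continuous η := Continuous.subtype_mk hcont1 _
  -- the continuous left inverse
  let g : {q : PrimeSpectrum (A ⊗[k] K) // q.asIdeal.IsMaximal} → PrimeSpectrum A :=
    fun q => PrimeSpectrum.comap (algebraMap A (A ⊗[k] K)) q.1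
  have hg : Continuous g :=
    (PrimeSpectrum.continuous_comap (algebraMap A (A ⊗[k] K))).comp continuous_subtype_val
  have hge : ∀ m, g (η m) = m.1 := by
    intro m
    apply PrimeSpectrum.ext
    show Ideal.comap _ _ = _
    exact stmt9_comap_map m.1.asIdeal m.2 (φ m) (hφ m)
  have hind : Topology.IsInducing (g ∘ η) := by
    have : g ∘ η = Subtype.val := funext hge
    rw [this]
    exact Topology.IsInducing.subtypeVal
  exact ⟨Topology.IsInducing.of_comp hcont hg hind,
    fun a c h => Subtype.ext (by rw [← hge a, ← hge c, h])⟩
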